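/- arXiv:2209.10594 — 3 statements merged into one kernel-verified Lean document; each statement's English description precedes it below -/
import Mathlib

section
/- Under the CFL condition and with velocities $\tilde{u}^n$ supported away from the boundary of $\Omega_h$, the $\ell^p$ norm of the explicit scheme solution satisfies $\|g^{n}\|_{p, h\mathbb{Z}^3}^p \le \|g^0\|_{p, h\mathbb{Z}^3}^p + \sum_{m=0}^{n-1}\sum_{x\in\Omega_h} (D\cdot \tilde{u}^m(x))\,|g^m(x)|^p\, h^3\tau$ for every $p\in[1,\infty)$ and every $n\ge 1$, where $D\cdot\tilde{u} = \sum_{j=1}^3 D_j \tilde{u}_j$ is the central-difference divergence. -/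
open Finset

/-- `ℓ^p` estimate for the explicit Lax–Friedrichs scheme: under the CFL condition,
with velocity `ũ` supported (together with its neighbors) inside `Ω_h`,
`‖gⁿ‖_{p}^p ≤ ‖g⁰‖_p^p + ∑_{m<n} ∑_{x∈Ω_h} (D·ũᵐ)(x) |gᵐ(x)|^p h³ τ`. -/
theorem lax_friedrichs_lp_estimate
    (h τ : ℝ) (hh : 0 < h) (hτ : 0 < τ)
    (Ωh : Finset (Fin 3 → ℤ))
    (u : ℕ → Fin 3 → (Fin 3 → ℤ) → ℝ)
    (g : ℕ → (Fin 3 → ℤ) → ℝ)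
    (hg0fin : (Function.support (g 0)).Finite)
    (husupp : ∀ n (j : Fin 3) (x : Fin 3 → ℤ), u n j x ≠ 0 →
      x ∈ Ωh ∧ ∀ i : Fin 3, (x + Pi.single i 1) ∈ Ωh ∧ (x - Pi.single i 1) ∈ Ωh)
    (hCFL : ∀ n (j : Fin 3) (x : Fin 3 → ℤ),
      0 ≤ 1 / 7 + τ / (2 * h) * u n j x ∧ 0 ≤ 1 / 7 - τ / (2 * h) * u n j x)
    (hscheme : ∀ n (x : Fin 3 → ℤ), g (n + 1) x =
      (1 / 7) * g n x + ∑ j : Fin 3,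
        ((1 / 7 + τ / (2 * h) * u n j x) * g n (x - Pi.single j 1)
          + (1 / 7 - τ / (2 * h) * u n j x) * g n (x + Pi.single j 1)))
    (p : ℝ) (hp : 1 ≤ p) :
    ∀ n : ℕ, 1 ≤ n →
      (∑' x : Fin 3 → ℤ, |g n x| ^ p * h ^ 3) ≤
        (∑' x : Fin 3 → ℤ, |g 0 x| ^ p * h ^ 3)
        + ∑ m ∈ Finset.range n, ∑ x ∈ Ωh,
            (∑ j : Fin 3,
              (u m j (x + Pi.single j 1) - u m j (x - Pi.single j 1)) / (2 * h))
            * |g m x| ^ p * h ^ 3 * τ := by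
  have hp0 : (0:ℝ) < p := lt_of_lt_of_le one_pos hp
  set lam : ℝ := τ / (2 * h) with hlamdef
  -- finiteness of supports
  have hfin : ∀ n, (Function.support (g n)).Finite := by
    intro n
    induction n with
    | zero => exact hg0fin
    | succ n ih =>
      have hsub : Function.support (g (n+1)) ⊆
          Function.support (g n) ∪
          ⋃ j : Fin 3, ((fun x => x - Pi.single j 1) ⁻¹' Function.support (g n) ∪
            (fun x => x + Pi.single j 1) ⁻¹' Function.support (g n)) := by
        intro x hx
        by_contra hxc
        simp only [Set.mem_union, Set.mem_iUnion, Set.mem_preimage, Function.mem_support,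
          ne_eq, not_or, not_exists, not_not] at hxc
        obtain ⟨h0, hj⟩ := hxc
        have : g (n+1) x = 0 := by
          rw [hscheme]
          simp only [h0]
          rw [Finset.sum_eq_zero (fun j _ => by rw [(hj j).1, (hj j).2]; ring)]
          ring
        exact hx this
      refine Set.Finite.subset ?_ hsub
      refine ih.union (Set.finite_iUnion fun j => Set.Finite.union ?_ ?_)
      · exact ih.preimage ((sub_left_injective).injOn)
      · exact ih.preimage ((add_left_injective _).injOn)
  -- summability helpers
  have hsum : ∀ (c : (Fin 3 → ℤ) → ℝ) (m : ℕ) (f : (Fin 3 → ℤ) → (Fin 3 → ℤ)),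
      Function.Injective f → Summable (fun x => c x * |g m (f x)| ^ p) := by
    intro c m f hf
    apply summable_of_finite_support
    apply Set.Finite.subset ((hfin m).preimage hf.injOn)
    intro x hx
    simp only [Function.mem_support, ne_eq] at hx
    simp only [Set.mem_preimage, Function.mem_support, ne_eq]
    intro hgz
    exact hx (by simp [hgz, Real.zero_rpow hp0.ne'])
  have hsum0 : ∀ m, Summable (fun x => |g m x| ^ p) := by
    intro m
    have := hsum (fun _ => (1:ℝ)) m id Function.injective_id
    simpa using this
  -- pointwise convexity inequality
  have hconv : ∀ m x, |g (m+1) x| ^ p ≤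
      (1/7) * |g m x| ^ p + ∑ j : Fin 3,
        ((1/7 + lam * u m j x) * |g m (x - Pi.single j 1)| ^ p
          + (1/7 - lam * u m j x) * |g m (x + Pi.single j 1)| ^ p) := by
    intro m x
    classical
    let w : Unit ⊕ Fin 3 × Bool → ℝ := Sum.elim (fun _ => 1/7)
      (fun jb => if jb.2 then 1/7 + lam * u m jb.1 x else 1/7 - lam * u m jb.1 x)
    let z : Unit ⊕ Fin 3 × Bool → ℝ := Sum.elim (fun _ => |g m x|)
      (fun jb => if jb.2 then |g m (x - Pi.single jb.1 1)| else |g m (x + Pi.single jb.1 1)|)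
    have hw : ∀ i ∈ (univ : Finset (Unit ⊕ Fin 3 × Bool)), 0 ≤ w i := by
      rintro (i | ⟨j, b⟩) -
      · norm_num [w]
      · cases b
        · simpa [w] using (hCFL m j x).2
        · simpa [w] using (hCFL m j x).1
    have hw1 : ∑ i, w i = 1 := by
      simp only [w, Fintype.sum_sum_type, Fintype.sum_prod_type, Fintype.sum_bool,
        Sum.elim_inl, Sum.elim_inr]
      simp [Fin.sum_univ_three]
      ring
    have hz : ∀ i ∈ (univ : Finset (Unit ⊕ Fin 3 × Bool)), 0 ≤ z i := by
      rintro (i | ⟨j, b⟩) -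
      · exact abs_nonneg _
      · cases b <;> simp [z, abs_nonneg]
    have h1 : |g (m+1) x| ≤ ∑ i, w i * z i := by
      have hexp : ∑ i, w i * z i =
          (1/7) * |g m x| + ∑ j : Fin 3,
            ((1/7 + lam * u m j x) * |g m (x - Pi.single j 1)|
              + (1/7 - lam * u m j x) * |g m (x + Pi.single j 1)|) := by
        simp only [w, z, Fintype.sum_sum_type, Fintype.sum_prod_type, Fintype.sum_bool,
          Sum.elim_inl, Sum.elim_inr, if_true, if_false]
        simp
      rw [hexp, hscheme]
      refine (abs_add_le _ _).trans (add_le_add ?_ ?_)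
      · rw [abs_mul, abs_of_nonneg (by norm_num : (0:ℝ) ≤ 1/7)]
      · refine (Finset.abs_sum_le_sum_abs _ _).trans (Finset.sum_le_sum fun j _ => ?_)
        refine (abs_add_le _ _).trans (add_le_add ?_ ?_)
        · rw [abs_mul, abs_of_nonneg (hCFL m j x).1]
        · rw [abs_mul, abs_of_nonneg (hCFL m j x).2]
    calc |g (m+1) x| ^ p ≤ (∑ i, w i * z i) ^ p :=
          Real.rpow_le_rpow (abs_nonneg _) h1 hp0.le
      _ ≤ ∑ i, w i * z i ^ p :=
          Real.rpow_arith_mean_le_arith_mean_rpow univ w z hw hw1 hz hp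
      _ = _ := by
          simp only [w, z, Fintype.sum_sum_type, Fintype.sum_prod_type, Fintype.sum_bool,
            Sum.elim_inl, Sum.elim_inr, if_true, if_false]
          simp
  -- one-step estimate
  have hstep : ∀ m, (∑' x : Fin 3 → ℤ, |g (m+1) x| ^ p) ≤ (∑' x : Fin 3 → ℤ, |g m x| ^ p)
      + ∑ x ∈ Ωh, lam * (∑ j : Fin 3,
          (u m j (x + Pi.single j 1) - u m j (x - Pi.single j 1))) * |g m x| ^ p := by
    intro m
    have S4 : Summable fun x : Fin 3 → ℤ => (1/7 : ℝ) * |g m x| ^ p :=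
      hsum (fun _ => (1/7:ℝ)) m id Function.injective_id
    have S2 : ∀ j : Fin 3, Summable fun x : Fin 3 → ℤ =>
        (1/7 + lam * u m j x) * |g m (x - Pi.single j 1)| ^ p :=
      fun j => hsum _ m _ sub_left_injective
    have S3 : ∀ j : Fin 3, Summable fun x : Fin 3 → ℤ =>
        (1/7 - lam * u m j x) * |g m (x + Pi.single j 1)| ^ p :=
      fun j => hsum _ m _ (add_left_injective _)
    have Ssum : Summable fun x : Fin 3 → ℤ => ∑ j : Fin 3,
        ((1/7 + lam * u m j x) * |g m (x - Pi.single j 1)| ^ p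
          + (1/7 - lam * u m j x) * |g m (x + Pi.single j 1)| ^ p) :=
      summable_sum fun j _ => (S2 j).add (S3 j)
    have S2' : ∀ j : Fin 3, Summable fun y : Fin 3 → ℤ =>
        (1/7 + lam * u m j (y + Pi.single j 1)) * |g m y| ^ p :=
      fun j => hsum _ m id Function.injective_id
    have S3' : ∀ j : Fin 3, Summable fun y : Fin 3 → ℤ =>
        (1/7 - lam * u m j (y - Pi.single j 1)) * |g m y| ^ p :=
      fun j => hsum _ m id Function.injective_id
    have hre1 : ∀ j : Fin 3,
        (∑' x : Fin 3 → ℤ, (1/7 + lam * u m j x) * |g m (x - Pi.single j 1)| ^ p)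
          = ∑' y : Fin 3 → ℤ, (1/7 + lam * u m j (y + Pi.single j 1)) * |g m y| ^ p := by
      intro j
      have := (Equiv.addRight (Pi.single j 1 : Fin 3 → ℤ)).tsum_eq
        (fun x => (1/7 + lam * u m j x) * |g m (x - Pi.single j 1)| ^ p)
      simp only [Equiv.coe_addRight, add_sub_cancel_right] at this
      exact this.symm
    have hre2 : ∀ j : Fin 3,
        (∑' x : Fin 3 → ℤ, (1/7 - lam * u m j x) * |g m (x + Pi.single j 1)| ^ p)
          = ∑' y : Fin 3 → ℤ, (1/7 - lam * u m j (y - Pi.single j 1)) * |g m y| ^ p := by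
      intro j
      have := (Equiv.subRight (Pi.single j 1 : Fin 3 → ℤ)).tsum_eq
        (fun x => (1/7 - lam * u m j x) * |g m (x + Pi.single j 1)| ^ p)
      simp only [Equiv.subRight_apply, sub_add_cancel] at this
      exact this.symm
    have SD : Summable fun y : Fin 3 → ℤ => lam * (∑ j : Fin 3,
        (u m j (y + Pi.single j 1) - u m j (y - Pi.single j 1))) * |g m y| ^ p :=
      hsum _ m id Function.injective_id
    calc (∑' x : Fin 3 → ℤ, |g (m+1) x| ^ p)
        ≤ ∑' x : Fin 3 → ℤ, ((1/7) * |g m x| ^ p + ∑ j : Fin 3,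
            ((1/7 + lam * u m j x) * |g m (x - Pi.single j 1)| ^ p
              + (1/7 - lam * u m j x) * |g m (x + Pi.single j 1)| ^ p)) :=
          Summable.tsum_le_tsum (fun x => hconv m x) (hsum0 (m+1)) (S4.add Ssum)
      _ = (∑' x : Fin 3 → ℤ, (1/7) * |g m x| ^ p) + ∑ j : Fin 3,
            ((∑' x : Fin 3 → ℤ, (1/7 + lam * u m j x) * |g m (x - Pi.single j 1)| ^ p)
              + ∑' x : Fin 3 → ℤ, (1/7 - lam * u m j x) * |g m (x + Pi.single j 1)| ^ p) := by
          rw [Summable.tsum_add S4 Ssum, Summable.tsum_finsetSum (fun j _ => (S2 j).add (S3 j))]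
          exact congrArg _ (Finset.sum_congr rfl fun j _ => Summable.tsum_add (S2 j) (S3 j))
      _ = (∑' x : Fin 3 → ℤ, (1/7) * |g m x| ^ p) + ∑ j : Fin 3,
            ((∑' y : Fin 3 → ℤ, (1/7 + lam * u m j (y + Pi.single j 1)) * |g m y| ^ p)
              + ∑' y : Fin 3 → ℤ, (1/7 - lam * u m j (y - Pi.single j 1)) * |g m y| ^ p) := by
          exact congrArg _ (Finset.sum_congr rfl fun j _ => by rw [hre1 j, hre2 j])
      _ = ∑' y : Fin 3 → ℤ, ((1/7) * |g m y| ^ p + ∑ j : Fin 3,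
            ((1/7 + lam * u m j (y + Pi.single j 1)) * |g m y| ^ p
              + (1/7 - lam * u m j (y - Pi.single j 1)) * |g m y| ^ p)) := by
          rw [Summable.tsum_add S4 (summable_sum fun j _ => (S2' j).add (S3' j)),
            Summable.tsum_finsetSum (fun j _ => (S2' j).add (S3' j))]
          exact congrArg _ (Finset.sum_congr rfl fun j _ => (Summable.tsum_add (S2' j) (S3' j)).symm)
      _ = ∑' y : Fin 3 → ℤ, (|g m y| ^ p + lam * (∑ j : Fin 3,
            (u m j (y + Pi.single j 1) - u m j (y - Pi.single j 1))) * |g m y| ^ p) := by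
          refine tsum_congr fun y => ?_
          rw [Fin.sum_univ_three, Fin.sum_univ_three]
          ring
      _ = (∑' y : Fin 3 → ℤ, |g m y| ^ p) + ∑' y : Fin 3 → ℤ, lam * (∑ j : Fin 3,
            (u m j (y + Pi.single j 1) - u m j (y - Pi.single j 1))) * |g m y| ^ p :=
          Summable.tsum_add (hsum0 m) SD
      _ = (∑' y : Fin 3 → ℤ, |g m y| ^ p) + ∑ x ∈ Ωh, lam * (∑ j : Fin 3,
            (u m j (x + Pi.single j 1) - u m j (x - Pi.single j 1))) * |g m x| ^ p := by
          congr 1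
          refine tsum_eq_sum fun y hy => ?_
          have hz : ∀ j : Fin 3, u m j (y + Pi.single j 1) = 0 ∧ u m j (y - Pi.single j 1) = 0 := by
            intro j
            constructor
            · by_contra hne
              have := ((husupp m j _ hne).2 j).2
              rw [add_sub_cancel_right] at this
              exact hy this
            · by_contra hne
              have := ((husupp m j _ hne).2 j).1
              rw [sub_add_cancel] at this
              exact hy this
          rw [Finset.sum_eq_zero (fun j _ => by rw [(hz j).1, (hz j).2]; ring)]
          ring
  -- iterate
  have hmain : ∀ n, (∑' x : Fin 3 → ℤ, |g n x| ^ p) ≤ (∑' x : Fin 3 → ℤ, |g 0 x| ^ p)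
      + ∑ m ∈ Finset.range n, ∑ x ∈ Ωh, lam * (∑ j : Fin 3,
          (u m j (x + Pi.single j 1) - u m j (x - Pi.single j 1))) * |g m x| ^ p := by
    intro n
    induction n with
    | zero => simp
    | succ n ih =>
      rw [Finset.sum_range_succ]
      have := hstep n
      linarith
  intro n _
  have h3 : (0:ℝ) ≤ h ^ 3 := by positivity
  calc (∑' x : Fin 3 → ℤ, |g n x| ^ p * h ^ 3)
      = (∑' x : Fin 3 → ℤ, |g n x| ^ p) * h ^ 3 := tsum_mul_right
    _ ≤ ((∑' x : Fin 3 → ℤ, |g 0 x| ^ p)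
          + ∑ m ∈ Finset.range n, ∑ x ∈ Ωh, lam * (∑ j : Fin 3,
            (u m j (x + Pi.single j 1) - u m j (x - Pi.single j 1))) * |g m x| ^ p) * h ^ 3 :=
        mul_le_mul_of_nonneg_right (hmain n) h3
    _ = (∑' x : Fin 3 → ℤ, |g 0 x| ^ p * h ^ 3)
        + ∑ m ∈ Finset.range n, ∑ x ∈ Ωh,
            (∑ j : Fin 3,
              (u m j (x + Pi.single j 1) - u m j (x - Pi.single j 1)) / (2 * h))
            * |g m x| ^ p * h ^ 3 * τ := by
        rw [add_mul, tsum_mul_right, Finset.sum_mul]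
        congr 1
        refine Finset.sum_congr rfl fun m _ => ?_
        rw [Finset.sum_mul]
        refine Finset.sum_congr rfl fun x _ => ?_
        rw [← Finset.sum_div, hlamdef]
        ring
end

section
/- Let $w^n : \Omega_h \to \mathbb{R}^3$ satisfy $D^-\cdot w^n = 0$ on $\Omega_h\setminus\partial\Omega_h$ and $w^n = 0$ on $\partial\Omega_h$ (extended by zero outside $\Omega_h$). Then for any grid function $g : \Omega_h\to\mathbb{R}$ with $g|_{\partial\Omega_h} = 0$, the skew-symmetric discrete advection term annihilates energy: $\sum_{j=1}^3\sum_{x\in\Omega_h\setminus\partial\Omega_h} \big(w^n_j(x-he^j)D^+_j g(x-he^j) + w^n_j(x)D^+_j g(x)\big)\,g(x)\, h^3 = 0$. -/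
open Finset

/-- Discrete boundary of a set `A ⊂ hℤ³` (identified with `ℤ³`):
`∂A = {x ∈ A | {x ± e^i} ⊄ A}`. -/
noncomputable def discreteBoundary (A : Finset (Fin 3 → ℤ)) : Finset (Fin 3 → ℤ)  :=
  open scoped Classical in
  A.filter fun x => ¬ ∀ i : Fin 3, (x + Pi.single i 1) ∈ A ∧ (x - Pi.single i 1) ∈ A

/-- Energy identity for the skew-symmetric (Ladyzhenskaya-type) discrete advection
term: if `wⁿ` is discrete divergence-free (`D⁻·wⁿ = 0` on `Ω_h∖∂Ω_h`) and vanishes on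
`∂Ω_h` and outside `Ω_h`, then for any grid function `g` vanishing on `∂Ω_h` and
outside `Ω_h`,
`∑_j ∑_x (wⁿ_j(x−he^j) D⁺_j g(x−he^j) + wⁿ_j(x) D⁺_j g(x)) g(x) h³ = 0`. -/
theorem discrete_advection_energy_identity
    (h : ℝ) (hh : 0 < h) (Ωh : Finset (Fin 3 → ℤ))
    (w : (Fin 3 → ℤ) → Fin 3 → ℝ) (g : (Fin 3 → ℤ) → ℝ)
    (hwdiv : ∀ x ∈ Ωh \ discreteBoundary Ωh,
      ∑ j : Fin 3, (w x j - w (x - Pi.single j 1) j) / h = 0)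
    (hw0 : ∀ x, x ∉ Ωh \ discreteBoundary Ωh → ∀ j : Fin 3, w x j = 0)
    (hg0 : ∀ x, x ∉ Ωh \ discreteBoundary Ωh → g x = 0) :
    ∑ j : Fin 3, ∑ x ∈ Ωh \ discreteBoundary Ωh,
        (w (x - Pi.single j 1) j * ((g x - g (x - Pi.single j 1)) / h)
          + w x j * ((g (x + Pi.single j 1) - g x) / h)) * g x * h ^ 3 = 0 := by
  classical
  set S := Ωh \ discreteBoundary Ωh with hS
  set F : Fin 3 → (Fin 3 → ℤ) → ℝ := fun j x => w x j * g x * g (x + Pi.single j 1) with hF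
  have hF0 : ∀ j x, x ∉ S → F j x = 0 := by
    intro j x hx; simp [hF, hw0 x hx j]
  have hF0' : ∀ j x, x + Pi.single j 1 ∉ S → F j x = 0 := by
    intro j x hx; simp [hF, hg0 _ hx]
  -- shift of summation index
  have shift : ∀ j, ∑ x ∈ S, F j (x - Pi.single j 1) = ∑ x ∈ S, F j x := by
    intro j
    have hinj : ∀ a ∈ S, ∀ b ∈ S,
        a - Pi.single j 1 = b - Pi.single j 1 → a = b := by
      intro a _ b _ hab
      have := congrArg (· + Pi.single j 1) hab
      simpa using this
    rw [← Finset.sum_image (f := F j) hinj]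
    set T := S ∪ S.image (fun x => x - Pi.single j 1) with hT
    have h1 : ∑ y ∈ S.image (fun x => x - Pi.single j 1), F j y = ∑ y ∈ T, F j y := by
      refine Finset.sum_subset Finset.subset_union_right ?_
      intro y hyT hy
      rcases Finset.mem_union.mp hyT with hyS | hyI
      · refine hF0' j y ?_
        intro hmem
        exact hy (Finset.mem_image.mpr ⟨y + Pi.single j 1, hmem, by simp⟩)
      · exact absurd hyI hy
    have h2 : ∑ y ∈ S, F j y = ∑ y ∈ T, F j y := by
      refine Finset.sum_subset Finset.subset_union_left ?_
      intro y _ hy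
      exact hF0 j y hy
    rw [h1, h2]
  -- rewrite each summand
  have key : ∀ j : Fin 3, ∀ x ∈ S,
      (w (x - Pi.single j 1) j * ((g x - g (x - Pi.single j 1)) / h)
          + w x j * ((g (x + Pi.single j 1) - g x) / h)) * g x * h ^ 3
        = (-((w x j - w (x - Pi.single j 1) j) / h) * (g x * g x)) * h ^ 3
          + ((F j x - F j (x - Pi.single j 1)) / h) * h ^ 3 := by
    intro j x _
    have hx : x - Pi.single j 1 + Pi.single j 1 = x := by simp
    simp only [hF, hx]
    ring
  calc
    ∑ j : Fin 3, ∑ x ∈ S,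
        (w (x - Pi.single j 1) j * ((g x - g (x - Pi.single j 1)) / h)
          + w x j * ((g (x + Pi.single j 1) - g x) / h)) * g x * h ^ 3
      = ∑ j : Fin 3, ∑ x ∈ S,
          ((-((w x j - w (x - Pi.single j 1) j) / h) * (g x * g x)) * h ^ 3
            + ((F j x - F j (x - Pi.single j 1)) / h) * h ^ 3) := by
        refine Finset.sum_congr rfl fun j _ => Finset.sum_congr rfl fun x hx => key j x hx
    _ = (∑ j : Fin 3, ∑ x ∈ S,
          (-((w x j - w (x - Pi.single j 1) j) / h) * (g x * g x)) * h ^ 3)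
        + ∑ j : Fin 3, ∑ x ∈ S, ((F j x - F j (x - Pi.single j 1)) / h) * h ^ 3 := by
        rw [← Finset.sum_add_distrib]
        exact Finset.sum_congr rfl fun j _ => Finset.sum_add_distrib
    _ = 0 := by
        have hdiv : (∑ j : Fin 3, ∑ x ∈ S,
            (-((w x j - w (x - Pi.single j 1) j) / h) * (g x * g x)) * h ^ 3) = 0 := by
          rw [Finset.sum_comm]
          refine Finset.sum_eq_zero fun x hx => ?_
          have := hwdiv x hx
          calc ∑ j : Fin 3,
              (-((w x j - w (x - Pi.single j 1) j) / h) * (g x * g x)) * h ^ 3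
              = (∑ j : Fin 3, (w x j - w (x - Pi.single j 1) j) / h)
                  * (-(g x * g x) * h ^ 3) := by
                rw [Finset.sum_mul]
                exact Finset.sum_congr rfl fun j _ => by ring
            _ = 0 := by rw [this]; ring
        have htel : (∑ j : Fin 3, ∑ x ∈ S,
            ((F j x - F j (x - Pi.single j 1)) / h) * h ^ 3) = 0 := by
          refine Finset.sum_eq_zero fun j _ => ?_
          calc ∑ x ∈ S, ((F j x - F j (x - Pi.single j 1)) / h) * h ^ 3
              = ∑ x ∈ S, (F j x * (h ^ 3 / h) - F j (x - Pi.single j 1) * (h ^ 3 / h)) :=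
                Finset.sum_congr rfl fun x _ => by ring
            _ = (∑ x ∈ S, F j x) * (h ^ 3 / h)
                - (∑ x ∈ S, F j (x - Pi.single j 1)) * (h ^ 3 / h) := by
                rw [Finset.sum_sub_distrib, Finset.sum_mul, Finset.sum_mul]
            _ = 0 := by rw [shift j, sub_self]
        rw [hdiv, htel, add_zero]
end

section
/- The implicit scheme $\frac{g^{n+1}(x) - g^n(x)}{\tau} + \frac12\sum_{j=1}^3 (w^n_j(x-he^j)D^+_j g^{n+1}(x-he^j) + w^n_j(x)D^+_j g^{n+1}(x)) = 0$ on $\Omega_h\setminus\partial\Omega_h$ with $g^{n+1}|_{\partial\Omega_h} = 0$ is uniquely solvable for every $h,\tau > 0$ (no scaling condition), and the solution satisfies $\|g^{n}\|_{2,\Omega_h} \le \|g^0\|_{2,\Omega_h}$ for all $n = 0,1,\dots,T_\tau$. -/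
open Finset

/-- `g` solves the implicit scheme with initial datum `g0`, velocity `w` and
zero boundary condition:
`(g^{n+1} − gⁿ)/τ + (1/2)∑_j (wⁿ_j(x−he^j) D⁺_j g^{n+1}(x−he^j) + wⁿ_j(x) D⁺_j g^{n+1}(x)) = 0`
on `Ω_h∖∂Ω_h`, and `g^{n+1} = 0` on `∂Ω_h` and outside `Ω_h`. -/
def SolvesImplicitScheme (h τ : ℝ) (Ωh : Finset (Fin 3 → ℤ))
    (w : ℕ → (Fin 3 → ℤ) → Fin 3 → ℝ) (g0 : (Fin 3 → ℤ) → ℝ)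
    (g : ℕ → (Fin 3 → ℤ) → ℝ) : Prop :=
  g 0 = g0 ∧ ∀ n : ℕ,
    (∀ x ∈ Ωh \ discreteBoundary Ωh,
      (g (n + 1) x - g n x) / τ
        + (1 / 2) * ∑ j : Fin 3,
            (w n (x - Pi.single j 1) j
                * ((g (n + 1) x - g (n + 1) (x - Pi.single j 1)) / h)
              + w n x j * ((g (n + 1) (x + Pi.single j 1) - g (n + 1) x) / h)) = 0) ∧
    (∀ x, x ∉ Ωh \ discreteBoundary Ωh → g (n + 1) x = 0)

lemma supp_fin (Ω' : Finset (Fin 3 → ℤ)) (F : (Fin 3 → ℤ) → ℝ)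
    (hF : ∀ x ∉ Ω', F x = 0) : (Function.support F).Finite :=
  Set.Finite.subset Ω'.finite_toSet fun x hx => by
    by_contra hxo; exact hx (hF x hxo)

lemma energy_j (Ω' : Finset (Fin 3 → ℤ)) (w : (Fin 3 → ℤ) → Fin 3 → ℝ)
    (hw0 : ∀ x ∉ Ω', ∀ j : Fin 3, w x j = 0)
    (u : (Fin 3 → ℤ) → ℝ) (hu : ∀ x ∉ Ω', u x = 0) (j : Fin 3) :
    ∑ᶠ x : Fin 3 → ℤ, u x * (w (x - Pi.single j 1) j * (u x - u (x - Pi.single j 1))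
        + w x j * (u (x + Pi.single j 1) - u x))
      = ∑ x ∈ Ω', (w (x - Pi.single j 1) j - w x j) * u x ^ 2 := by
  set δ : Fin 3 → ℤ := Pi.single j 1 with hδ
  set G : (Fin 3 → ℤ) → ℝ := fun x => w (x - δ) j * (u x * (u x - u (x - δ))) with hG
  set H : (Fin 3 → ℤ) → ℝ := fun x => w x j * (u x * (u (x + δ) - u x)) with hH
  have hGfin : (Function.support G).Finite := supp_fin Ω' G fun x hx => by simp [hG, hu x hx]
  have hHfin : (Function.support H).Finite := supp_fin Ω' H fun x hx => by simp [hH, hu x hx]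
  have hGsfin : (Function.support fun x => G (x + δ)).Finite := by
    have : (Function.support fun x => G (x + δ)) = (Equiv.addRight δ) ⁻¹' (Function.support G) := rfl
    rw [this]; exact hGfin.preimage (Equiv.injective _).injOn
  set K : (Fin 3 → ℤ) → ℝ := fun x => w x j * u (x + δ) ^ 2 with hK
  set M : (Fin 3 → ℤ) → ℝ := fun x => w x j * u x ^ 2 with hM
  have hKfin : (Function.support K).Finite := supp_fin Ω' K fun x hx => by simp [hK, hw0 x hx]
  have hMfin : (Function.support M).Finite := supp_fin Ω' M fun x hx => by simp [hM, hw0 x hx]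
  have step1 : ∑ᶠ x : Fin 3 → ℤ, u x * (w (x - δ) j * (u x - u (x - δ))
        + w x j * (u (x + δ) - u x)) = ∑ᶠ x, (G x + H x) :=
    finsum_congr fun x => by simp only [hG, hH]; ring
  have step2 : ∑ᶠ x, (G x + H x) = (∑ᶠ x, G x) + ∑ᶠ x, H x := finsum_add_distrib hGfin hHfin
  have step3 : (∑ᶠ x, G x) = ∑ᶠ x, G (x + δ) := by
    rw [← finsum_comp_equiv (Equiv.addRight δ)]
    exact finsum_congr fun x => rfl
  have step4 : (∑ᶠ x, G (x + δ)) + (∑ᶠ x, H x) = ∑ᶠ x, (G (x + δ) + H x) :=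
    (finsum_add_distrib hGsfin hHfin).symm
  have step5 : ∀ x, G (x + δ) + H x = K x - M x := by
    intro x
    simp only [hG, hH, hK, hM, add_sub_cancel_right]
    ring
  have step6 : ∑ᶠ x, (G (x + δ) + H x) = (∑ᶠ x, K x) - ∑ᶠ x, M x := by
    rw [finsum_congr step5]
    exact finsum_sub_distrib hKfin hMfin
  have step7 : (∑ᶠ x, K x) = ∑ᶠ x, w (x - δ) j * u x ^ 2 := by
    rw [← finsum_comp_equiv (Equiv.subRight δ) (f := K)]
    exact finsum_congr fun x => by simp [hK, sub_add_cancel]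
  have hK2fin : (Function.support fun x => w (x - δ) j * u x ^ 2).Finite :=
    supp_fin Ω' _ fun x hx => by simp [hu x hx]
  have step8 : (∑ᶠ x, w (x - δ) j * u x ^ 2) - (∑ᶠ x, M x)
      = ∑ᶠ x, (w (x - δ) j - w x j) * u x ^ 2 := by
    rw [← finsum_sub_distrib hK2fin hMfin]
    exact finsum_congr fun x => by simp only [hM]; ring
  have step9 : (∑ᶠ x, (w (x - δ) j - w x j) * u x ^ 2)
      = ∑ x ∈ Ω', (w (x - δ) j - w x j) * u x ^ 2 := by
    apply finsum_eq_sum_of_support_subset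
    intro x hx
    simp only [Function.mem_support] at hx
    by_contra hxo
    exact hx (by simp [hu x hxo])
  rw [step1, step2, step3, step4, step6, step7, step8, step9]

lemma energy_aux (Ω' : Finset (Fin 3 → ℤ)) (w : (Fin 3 → ℤ) → Fin 3 → ℝ)
    (hw0 : ∀ x ∉ Ω', ∀ j : Fin 3, w x j = 0)
    (hdiv : ∀ x ∈ Ω', ∑ j : Fin 3, (w x j - w (x - Pi.single j 1) j) = 0)
    (u : (Fin 3 → ℤ) → ℝ) (hu : ∀ x ∉ Ω', u x = 0) :
    ∑ x ∈ Ω', u x * ∑ j : Fin 3, (w (x - Pi.single j 1) j * (u x - u (x - Pi.single j 1))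
      + w x j * (u (x + Pi.single j 1) - u x)) = 0 := by
  set F : Fin 3 → (Fin 3 → ℤ) → ℝ := fun j x =>
    u x * (w (x - Pi.single j 1) j * (u x - u (x - Pi.single j 1))
      + w x j * (u (x + Pi.single j 1) - u x)) with hF
  have hFfin : ∀ j, (Function.support (F j)).Finite := fun j =>
    supp_fin Ω' (F j) fun x hx => by simp [hF, hu x hx]
  have hF01fin : (Function.support fun x => F 0 x + F 1 x).Finite :=
    supp_fin Ω' _ fun x hx => by simp [hF, hu x hx]
  have step1 : ∑ x ∈ Ω', u x * ∑ j : Fin 3,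
      (w (x - Pi.single j 1) j * (u x - u (x - Pi.single j 1))
        + w x j * (u (x + Pi.single j 1) - u x))
      = ∑ᶠ x, (F 0 x + F 1 x + F 2 x) := by
    rw [← finsum_eq_sum_of_support_subset]
    · exact finsum_congr fun x => by rw [Fin.sum_univ_three] at *; simp only [hF]; ring
    · intro x hx
      simp only [Function.mem_support] at hx
      by_contra hxo
      exact hx (by simp [hu x hxo])
  rw [step1, finsum_add_distrib hF01fin (hFfin 2), finsum_add_distrib (hFfin 0) (hFfin 1)]
  have hj : ∀ j : Fin 3, (∑ᶠ x, F j x) = ∑ x ∈ Ω', (w (x - Pi.single j 1) j - w x j) * u x ^ 2 :=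
    fun j => energy_j Ω' w hw0 u hu j
  rw [hj 0, hj 1, hj 2, ← Finset.sum_add_distrib, ← Finset.sum_add_distrib]
  apply Finset.sum_eq_zero
  intro x hx
  have h1 : ∑ j : Fin 3, (w (x - Pi.single j 1) j - w x j) = 0 := by
    have h2 := hdiv x hx
    have h3 : ∑ j : Fin 3, (w (x - Pi.single j 1) j - w x j)
        = -∑ j : Fin 3, (w x j - w (x - Pi.single j 1) j) := by
      rw [← Finset.sum_neg_distrib]
      exact Finset.sum_congr rfl fun j _ => (neg_sub _ _).symm
    rw [h3, h2, neg_zero]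
  rw [Fin.sum_univ_three] at h1
  nlinarith [h1]

lemma key_identity (h τ : ℝ) (hh : h ≠ 0) (hτ : τ ≠ 0) (Ω' : Finset (Fin 3 → ℤ))
    (w : (Fin 3 → ℤ) → Fin 3 → ℝ) (hw0 : ∀ x ∉ Ω', ∀ j : Fin 3, w x j = 0)
    (hdiv : ∀ x ∈ Ω', ∑ j : Fin 3, (w x j - w (x - Pi.single j 1) j) / h = 0)
    (u v : (Fin 3 → ℤ) → ℝ) (hu : ∀ x ∉ Ω', u x = 0)
    (hs : ∀ x ∈ Ω', (u x - v x) / τ + (1 / 2) * ∑ j : Fin 3,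
        (w (x - Pi.single j 1) j * ((u x - u (x - Pi.single j 1)) / h)
          + w x j * ((u (x + Pi.single j 1) - u x) / h)) = 0) :
    ∑ x ∈ Ω', u x ^ 2 = ∑ x ∈ Ω', u x * v x := by
  have hdiv' : ∀ x ∈ Ω', ∑ j : Fin 3, (w x j - w (x - Pi.single j 1) j) = 0 := by
    intro x hx
    have h2 := hdiv x hx
    rw [← Finset.sum_div] at h2
    exact (div_eq_zero_iff.mp h2).resolve_right hh
  have E := energy_aux Ω' w hw0 hdiv' u hu
  have main : ∑ x ∈ Ω', ((u x ^ 2 - u x * v x) / τ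
      + (1 / (2 * h)) * (u x * ∑ j : Fin 3,
        (w (x - Pi.single j 1) j * (u x - u (x - Pi.single j 1))
          + w x j * (u (x + Pi.single j 1) - u x)))) = 0 := by
    apply Finset.sum_eq_zero
    intro x hx
    have hsx := hs x hx
    have hsum : ∑ j : Fin 3, (w (x - Pi.single j 1) j * ((u x - u (x - Pi.single j 1)) / h)
          + w x j * ((u (x + Pi.single j 1) - u x) / h))
        = (1 / h) * ∑ j : Fin 3, (w (x - Pi.single j 1) j * (u x - u (x - Pi.single j 1))
          + w x j * (u (x + Pi.single j 1) - u x)) := by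
      rw [Finset.mul_sum]
      exact Finset.sum_congr rfl fun j _ => by ring
    rw [hsum] at hsx
    have hexp : (u x ^ 2 - u x * v x) / τ
        + (1 / (2 * h)) * (u x * ∑ j : Fin 3,
          (w (x - Pi.single j 1) j * (u x - u (x - Pi.single j 1))
            + w x j * (u (x + Pi.single j 1) - u x)))
        = u x * ((u x - v x) / τ + (1 / 2) * ((1 / h) * ∑ j : Fin 3,
          (w (x - Pi.single j 1) j * (u x - u (x - Pi.single j 1))
            + w x j * (u (x + Pi.single j 1) - u x)))) := by
      field_simp
    rw [hexp, hsx, mul_zero]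
  rw [Finset.sum_add_distrib, ← Finset.mul_sum, E, mul_zero, add_zero, ← Finset.sum_div,
    div_eq_zero_iff] at main
  have h4 := main.resolve_right hτ
  rw [Finset.sum_sub_distrib, sub_eq_zero] at h4
  exact h4

noncomputable def extOmega (Ω' : Finset (Fin 3 → ℤ)) :
    ({x // x ∈ Ω'} → ℝ) →ₗ[ℝ] ((Fin 3 → ℤ) → ℝ) where
  toFun u x := if hx : x ∈ Ω' then u ⟨x, hx⟩ else 0
  map_add' u v := by funext x; by_cases hx : x ∈ Ω' <;> simp [hx]
  map_smul' c u := by funext x; by_cases hx : x ∈ Ω' <;> simp [hx]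

lemma extOmega_of_mem (Ω' : Finset (Fin 3 → ℤ)) (u : {x // x ∈ Ω'} → ℝ)
    {x : Fin 3 → ℤ} (hx : x ∈ Ω') : extOmega Ω' u x = u ⟨x, hx⟩ := dif_pos hx

lemma extOmega_of_not_mem (Ω' : Finset (Fin 3 → ℤ)) (u : {x // x ∈ Ω'} → ℝ)
    {x : Fin 3 → ℤ} (hx : x ∉ Ω') : extOmega Ω' u x = 0 := dif_neg hx

noncomputable def schemeMap (h τ : ℝ) (Ω' : Finset (Fin 3 → ℤ))
    (w : (Fin 3 → ℤ) → Fin 3 → ℝ) :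
    ({x // x ∈ Ω'} → ℝ) →ₗ[ℝ] ({x // x ∈ Ω'} → ℝ) where
  toFun u x := extOmega Ω' u x.1 / τ
      + (1 / 2) * ∑ j : Fin 3,
          (w (x.1 - Pi.single j 1) j
              * ((extOmega Ω' u x.1 - extOmega Ω' u (x.1 - Pi.single j 1)) / h)
            + w x.1 j * ((extOmega Ω' u (x.1 + Pi.single j 1) - extOmega Ω' u x.1) / h))
  map_add' u v := by
    funext x
    simp only [map_add, Pi.add_apply]
    rw [Fin.sum_univ_three, Fin.sum_univ_three, Fin.sum_univ_three]
    ring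
  map_smul' c u := by
    funext x
    simp only [map_smul, Pi.smul_apply, smul_eq_mul, RingHom.id_apply]
    rw [Fin.sum_univ_three, Fin.sum_univ_three]
    ring

lemma schemeMap_apply (h τ : ℝ) (Ω' : Finset (Fin 3 → ℤ))
    (w : (Fin 3 → ℤ) → Fin 3 → ℝ) (u : {x // x ∈ Ω'} → ℝ) (x : {x // x ∈ Ω'}) :
    schemeMap h τ Ω' w u x = extOmega Ω' u x.1 / τ
      + (1 / 2) * ∑ j : Fin 3,
          (w (x.1 - Pi.single j 1) j
              * ((extOmega Ω' u x.1 - extOmega Ω' u (x.1 - Pi.single j 1)) / h)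
            + w x.1 j * ((extOmega Ω' u (x.1 + Pi.single j 1) - extOmega Ω' u x.1) / h)) := rfl

/-- The implicit scheme with discrete divergence-free velocity is uniquely solvable for
every `h, τ > 0` (no scaling condition), and the solution satisfies the discrete `L²`
bound `‖gⁿ‖_{2,Ω_h} ≤ ‖g⁰‖_{2,Ω_h}` for all `n`. -/
theorem implicit_scheme_solvable_and_L2_stable
    (h τ : ℝ) (hh : 0 < h) (hτ : 0 < τ)
    (Ωh : Finset (Fin 3 → ℤ))
    (w : ℕ → (Fin 3 → ℤ) → Fin 3 → ℝ)
    (hwdiv : ∀ n, ∀ x ∈ Ωh \ discreteBoundary Ωh,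
      ∑ j : Fin 3, (w n x j - w n (x - Pi.single j 1) j) / h = 0)
    (hw0 : ∀ n x, x ∉ Ωh \ discreteBoundary Ωh → ∀ j : Fin 3, w n x j = 0)
    (g0 : (Fin 3 → ℤ) → ℝ)
    (hg00 : ∀ x, x ∉ Ωh \ discreteBoundary Ωh → g0 x = 0) :
    (∃! g : ℕ → (Fin 3 → ℤ) → ℝ, SolvesImplicitScheme h τ Ωh w g0 g) ∧
    (∀ g : ℕ → (Fin 3 → ℤ) → ℝ, SolvesImplicitScheme h τ Ωh w g0 g →
      ∀ n : ℕ, ∑ x ∈ Ωh, (g n x) ^ 2 * h ^ 3 ≤ ∑ x ∈ Ωh, (g0 x) ^ 2 * h ^ 3) := by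
  classical
  set Ω' : Finset (Fin 3 → ℤ) := Ωh \ discreteBoundary Ωh with hΩ'
  -- vanishing of any solution outside Ω'
  have hz : ∀ (g : ℕ → (Fin 3 → ℤ) → ℝ), SolvesImplicitScheme h τ Ωh w g0 g →
      ∀ m, ∀ x ∉ Ω', g m x = 0 := by
    intro g hg m
    cases m with
    | zero => intro x hx; rw [hg.1]; exact hg00 x hx
    | succ m => exact (hg.2 m).2
  -- characterization of one step of any solution via the linear map
  have hchar : ∀ (G : ℕ → (Fin 3 → ℤ) → ℝ), SolvesImplicitScheme h τ Ωh w g0 G →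
      ∀ n : ℕ, (extOmega Ω' (fun x : {x // x ∈ Ω'} => G (n + 1) x.1) = G (n + 1)) ∧
        schemeMap h τ Ω' (w n) (fun x : {x // x ∈ Ω'} => G (n + 1) x.1)
          = fun x : {x // x ∈ Ω'} => G n x.1 / τ := by
    intro G hG n
    have hext : extOmega Ω' (fun x : {x // x ∈ Ω'} => G (n + 1) x.1) = G (n + 1) := by
      funext x
      by_cases hx : x ∈ Ω'
      · exact extOmega_of_mem Ω' _ hx
      · rw [extOmega_of_not_mem Ω' _ hx, (hG.2 n).2 x hx]
    refine ⟨hext, ?_⟩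
    funext x
    rw [schemeMap_apply, hext]
    have h2 := (hG.2 n).1 x.1 x.2
    rw [sub_div] at h2
    linarith
  -- injectivity of the scheme map
  have hker : ∀ n (u : {x // x ∈ Ω'} → ℝ), schemeMap h τ Ω' (w n) u = 0 → u = 0 := by
    intro n u hu0
    have hUo : ∀ x ∉ Ω', extOmega Ω' u x = 0 := fun x hx => extOmega_of_not_mem Ω' u hx
    have hs : ∀ x ∈ Ω', (extOmega Ω' u x - (0 : (Fin 3 → ℤ) → ℝ) x) / τ
        + (1 / 2) * ∑ j : Fin 3,
          (w n (x - Pi.single j 1) j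
              * ((extOmega Ω' u x - extOmega Ω' u (x - Pi.single j 1)) / h)
            + w n x j * ((extOmega Ω' u (x + Pi.single j 1) - extOmega Ω' u x) / h)) = 0 := by
      intro x hx
      have h3 := congrFun hu0 ⟨x, hx⟩
      rw [schemeMap_apply] at h3
      simp only [Pi.zero_apply, sub_zero]
      exact h3
    have hkey := key_identity h τ hh.ne' hτ.ne' Ω' (w n) (fun x hx j => hw0 n x hx j)
      (hwdiv n) (extOmega Ω' u) 0 hUo hs
    simp only [Pi.zero_apply, mul_zero, Finset.sum_const_zero] at hkey
    have hzz := (Finset.sum_eq_zero_iff_of_nonneg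
      (fun x _ => sq_nonneg (extOmega Ω' u x))).mp hkey
    funext x
    have h4 := hzz x.1 x.2
    rw [extOmega_of_mem Ω' u x.2] at h4
    have := pow_eq_zero_iff (n := 2) (by norm_num) |>.mp h4
    simpa using this
  have hinj : ∀ n, Function.Injective (schemeMap h τ Ω' (w n)) := fun n =>
    LinearMap.ker_eq_bot.mp (LinearMap.ker_eq_bot'.mpr (hker n))
  have hsurj : ∀ n, Function.Surjective (schemeMap h τ Ω' (w n)) := fun n =>
    LinearMap.injective_iff_surjective.mp (hinj n)
  choose sol hsol using fun n (b : {x // x ∈ Ω'} → ℝ) => hsurj n b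
  -- construct the solution
  set gsol : ℕ → (Fin 3 → ℤ) → ℝ := fun n => Nat.rec g0
    (fun n v => extOmega Ω' (sol n (fun x : {x // x ∈ Ω'} => v x.1 / τ))) n with hgsol
  have hrec : ∀ n, gsol (n + 1)
      = extOmega Ω' (sol n (fun x : {x // x ∈ Ω'} => gsol n x.1 / τ)) := fun n => rfl
  have hsolve : SolvesImplicitScheme h τ Ωh w g0 gsol := by
    refine ⟨rfl, fun n => ⟨?_, ?_⟩⟩
    · intro x hx
      have hspec := congrFun (hsol n (fun x : {x // x ∈ Ω'} => gsol n x.1 / τ)) ⟨x, hx⟩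
      rw [schemeMap_apply] at hspec
      rw [hrec n, sub_div]
      linarith
    · intro x hx
      rw [hrec n]
      exact extOmega_of_not_mem Ω' _ hx
  -- stability for any solution
  have hstab : ∀ g : ℕ → (Fin 3 → ℤ) → ℝ, SolvesImplicitScheme h τ Ωh w g0 g →
      ∀ n : ℕ, ∑ x ∈ Ωh, (g n x) ^ 2 * h ^ 3 ≤ ∑ x ∈ Ωh, (g0 x) ^ 2 * h ^ 3 := by
    intro g hg n
    have hstep : ∀ m, ∑ x ∈ Ω', g (m + 1) x ^ 2 ≤ ∑ x ∈ Ω', g m x ^ 2 := by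
      intro m
      have hkey := key_identity h τ hh.ne' hτ.ne' Ω' (w m) (fun x hx j => hw0 m x hx j)
        (hwdiv m) (g (m + 1)) (g m) (hz g hg (m + 1)) ((hg.2 m).1)
      have hcs := Finset.sum_mul_sq_le_sq_mul_sq Ω' (fun x => g (m + 1) x) (fun x => g m x)
      have hA0 : (0:ℝ) ≤ ∑ x ∈ Ω', g (m + 1) x ^ 2 := Finset.sum_nonneg fun x _ => sq_nonneg _
      have hB0 : (0:ℝ) ≤ ∑ x ∈ Ω', g m x ^ 2 := Finset.sum_nonneg fun x _ => sq_nonneg _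
      rcases eq_or_lt_of_le hA0 with hA | hA
      · linarith
      · nlinarith
    have hmono : ∀ m, ∑ x ∈ Ω', g m x ^ 2 ≤ ∑ x ∈ Ω', g 0 x ^ 2 := by
      intro m
      induction m with
      | zero => exact le_refl _
      | succ m ih => exact le_trans (hstep m) ih
    have hsum_eq : ∀ m, ∑ x ∈ Ωh, g m x ^ 2 * h ^ 3 = (∑ x ∈ Ω', g m x ^ 2) * h ^ 3 := by
      intro m
      rw [← Finset.sum_subset (Finset.sdiff_subset)
        (fun x _ hx => by rw [hz g hg m x hx]; ring), ← Finset.sum_mul]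
    calc ∑ x ∈ Ωh, g n x ^ 2 * h ^ 3 = (∑ x ∈ Ω', g n x ^ 2) * h ^ 3 := hsum_eq n
      _ ≤ (∑ x ∈ Ω', g 0 x ^ 2) * h ^ 3 :=
          mul_le_mul_of_nonneg_right (hmono n) (by positivity)
      _ = ∑ x ∈ Ωh, g 0 x ^ 2 * h ^ 3 := (hsum_eq 0).symm
      _ = ∑ x ∈ Ωh, g0 x ^ 2 * h ^ 3 := by rw [hg.1]
  refine ⟨⟨gsol, hsolve, ?_⟩, hstab⟩
  intro G hG
  funext n
  induction n with
  | zero => exact hG.1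
  | succ n ih =>
    obtain ⟨hGext, hGeq⟩ := hchar G hG n
    obtain ⟨hgext, hgeq⟩ := hchar gsol hsolve n
    have hres : (fun x : {x // x ∈ Ω'} => G (n + 1) x.1)
        = fun x : {x // x ∈ Ω'} => gsol (n + 1) x.1 := by
      apply hinj n
      rw [hGeq, hgeq, ih]
    calc G (n + 1) = extOmega Ω' (fun x : {x // x ∈ Ω'} => G (n + 1) x.1) := hGext.symm
      _ = extOmega Ω' (fun x : {x // x ∈ Ω'} => gsol (n + 1) x.1) := by rw [hres]
      _ = gsol (n + 1) := hgext
end
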